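/- Let G be the free metabelian group of rank n with standard generators x₁,…,xₙ. Then the commutator subgroup G' is generated, as a subgroup of G, by the set of collected conjugated commutators {w⁻¹·⁅xᵢ,xⱼ⁆·w : 1 ≤ j < i ≤ n, w an element of the subgroup of G generated by x₁,…,xᵢ}. -/

import Mathlib

/-- The commutator ⁅a,b⁆ = a⁻¹b⁻¹ab (paper convention). -/
def pcomm {G : Type*} [Group G] (a b : G) : G := a⁻¹ * b⁻¹ * a * b

instance (n : ℕ) : (derivedSeries (FreeGroup (Fin n)) 2).Normal :=
  derivedSeries_normal _ _

/-- The free metabelian group of rank n: the quotient of the free group on n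
generators by its second derived subgroup. -/
def freeMetabelian (n : ℕ) :=
  FreeGroup (Fin n) ⧸ derivedSeries (FreeGroup (Fin n)) 2

instance (n : ℕ) : Group (freeMetabelian n) :=
  inferInstanceAs (Group (FreeGroup (Fin n) ⧸ derivedSeries (FreeGroup (Fin n)) 2))

/-- The images of the standard generators of the free group in the free
metabelian group. -/
def xgen (n : ℕ) (i : Fin n) : freeMetabelian n :=
  QuotientGroup.mk (FreeGroup.of i)

namespace Stmt12Aux

open Subgroup

open scoped commutatorElement

variable {n : ℕ}

/-- The generating set from the statement. -/
def Sset (n : ℕ) : Set (freeMetabelian n) :=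
  {a : freeMetabelian n |
    ∃ i j : Fin n, j < i ∧
      ∃ w ∈ Subgroup.closure (xgen n '' {k : Fin n | k ≤ i}),
        a = w⁻¹ * pcomm (xgen n i) (xgen n j) * w}

/-- The subgroup generated by it. -/
def NN (n : ℕ) : Subgroup (freeMetabelian n) := Subgroup.closure (Sset n)

lemma derived2 (n : ℕ) : derivedSeries (freeMetabelian n) 2 = ⊥ := by
  have hs : Function.Surjective (QuotientGroup.mk' (derivedSeries (FreeGroup (Fin n)) 2)) :=
    QuotientGroup.mk'_surjective _
  have h := (map_derivedSeries_eq hs 2).symm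
  refine h.trans ?_
  exact (Subgroup.map_eq_bot_iff _).mpr (by rw [QuotientGroup.ker_mk'])

lemma pcomm_mem_commutator (a b : freeMetabelian n) : pcomm a b ∈ commutator (freeMetabelian n) := by
  have : pcomm a b = ⁅a⁻¹, b⁻¹⁆ := by
    simp only [pcomm, commutatorElement_def]; group
  rw [this, _root_.commutator_def]
  exact Subgroup.commutator_mem_commutator (Subgroup.mem_top _) (Subgroup.mem_top _)

lemma mem_comm {u v : freeMetabelian n} (hu : u ∈ commutator (freeMetabelian n))
    (hv : v ∈ commutator (freeMetabelian n)) : u * v = v * u := by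
  have h2 : ⁅u, v⁆ ∈ derivedSeries (freeMetabelian n) 2 := by
    have e : derivedSeries (freeMetabelian n) 2
        = ⁅commutator (freeMetabelian n), commutator (freeMetabelian n)⁆ := by
      show derivedSeries _ (1+1) = _
      rw [derivedSeries_succ, _root_.commutator_def, derivedSeries_succ, derivedSeries_zero]
    rw [e]
    exact Subgroup.commutator_mem_commutator hu hv
  rw [derived2] at h2
  have : ⁅u, v⁆ = 1 := by simpa using h2
  exact (commutatorElement_eq_one_iff_commute.mp this).eq

/-- swap lemma: conjugation of a commutator-subgroup element only depends on the
order-swapped product. -/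
lemma conj_swap {u : freeMetabelian n} (hu : u ∈ commutator (freeMetabelian n))
    (a b : freeMetabelian n) :
    (a * b)⁻¹ * u * (a * b) = (b * a)⁻¹ * u * (b * a) := by
  set X := (b * a)⁻¹ * u * (b * a) with hX
  have hXmem : X ∈ commutator (freeMetabelian n) := by
    have h := (Subgroup.commutator_normal (⊤ : Subgroup (freeMetabelian n)) ⊤).conj_mem u
      (by rwa [_root_.commutator_def] at hu) (b * a)⁻¹
    have e : X = (b * a)⁻¹ * u * ((b * a)⁻¹)⁻¹ := by rw [hX]; group
    rw [_root_.commutator_def, e]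
    exact h
  have hd : pcomm a b ∈ commutator (freeMetabelian n) := pcomm_mem_commutator a b
  have e : (a * b)⁻¹ * u * (a * b) = (pcomm a b)⁻¹ * X * pcomm a b := by
    rw [hX]; simp only [pcomm]; group
  rw [e]
  have := mem_comm hXmem hd
  calc (pcomm a b)⁻¹ * X * pcomm a b = (pcomm a b)⁻¹ * (X * pcomm a b) := by group
    _ = (pcomm a b)⁻¹ * (pcomm a b * X) := by rw [this]
    _ = X := by group

lemma closure_xgen_top (n : ℕ) : Subgroup.closure (Set.range (xgen n)) = ⊤ := by
  have hr : Set.range (xgen n)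
      = (QuotientGroup.mk' (derivedSeries (FreeGroup (Fin n)) 2)) '' Set.range FreeGroup.of := by
    rw [← Set.range_comp]; rfl
  have h : Subgroup.closure
      ((QuotientGroup.mk' (derivedSeries (FreeGroup (Fin n)) 2)) '' Set.range FreeGroup.of)
      = (⊤ : Subgroup (FreeGroup (Fin n) ⧸ derivedSeries (FreeGroup (Fin n)) 2)) := by
    rw [← MonoidHom.map_closure, FreeGroup.closure_range_of,
      Subgroup.map_top_of_surjective _ (QuotientGroup.mk'_surjective _)]
  rw [hr]
  exact h

/-- generic: if conjugation by `v` sends generators into the closure, it sends the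
whole closure into the closure. -/
lemma conj_closure {H : Type*} [Group H] {T : Set H} {v : H}
    (h : ∀ s ∈ T, v⁻¹ * s * v ∈ Subgroup.closure T) :
    ∀ x ∈ Subgroup.closure T, v⁻¹ * x * v ∈ Subgroup.closure T := by
  intro x hx
  induction hx using Subgroup.closure_induction with
  | mem s hs => exact h s hs
  | one => simpa using one_mem (Subgroup.closure T)
  | mul x y hx hy ihx ihy =>
    have e : v⁻¹ * (x * y) * v = (v⁻¹ * x * v) * (v⁻¹ * y * v) := by group
    rw [e]; exact mul_mem ihx ihy
  | inv x hx ihx =>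
    have e : v⁻¹ * x⁻¹ * v = (v⁻¹ * x * v)⁻¹ := by group
    rw [e]; exact inv_mem ihx

/-- The "level k" generators. -/
def Mset (n : ℕ) (k : Fin n) : Set (freeMetabelian n) :=
  {a : freeMetabelian n |
    ∃ m : Fin n, m < k ∧
      ∃ g ∈ Subgroup.closure (xgen n '' {l : Fin n | l ≤ k}),
        a = g⁻¹ * pcomm (xgen n k) (xgen n m) * g}

lemma Mset_subset_Sset (k : Fin n) : Mset n k ⊆ Sset n := by
  rintro a ⟨m, hm, g, hg, rfl⟩
  exact ⟨k, m, hm, g, hg, rfl⟩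

lemma conjM (k : Fin n) {v : freeMetabelian n}
    (hv : v ∈ Subgroup.closure (xgen n '' {l : Fin n | l ≤ k})) :
    ∀ x ∈ Subgroup.closure (Mset n k), v⁻¹ * x * v ∈ Subgroup.closure (Mset n k) := by
  apply conj_closure
  rintro s ⟨m, hm, g, hg, rfl⟩
  have e : v⁻¹ * (g⁻¹ * pcomm (xgen n k) (xgen n m) * g) * v
      = (g * v)⁻¹ * pcomm (xgen n k) (xgen n m) * (g * v) := by group
  rw [e]
  exact Subgroup.subset_closure ⟨m, hm, g * v, mul_mem hg hv, rfl⟩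

lemma xk_mem_le (k : Fin n) : xgen n k ∈ Subgroup.closure (xgen n '' {l : Fin n | l ≤ k}) :=
  Subgroup.subset_closure ⟨k, le_refl k, rfl⟩

/-- Lemma C : pcomm of any low word with `x_k^{±1}` lies in the level-k subgroup. -/
lemma lemC (k : Fin n) (c : freeMetabelian n)
    (hc : c = xgen n k ∨ c = (xgen n k)⁻¹) :
    ∀ v ∈ Subgroup.closure (xgen n '' {l : Fin n | l < k}),
      pcomm v c ∈ Subgroup.closure (Mset n k) := by
  have hsub : Subgroup.closure (xgen n '' {l : Fin n | l < k})
      ≤ Subgroup.closure (xgen n '' {l : Fin n | l ≤ k}) :=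
    Subgroup.closure_mono (Set.image_mono (Set.setOf_subset_setOf.mpr (fun l hl => le_of_lt hl)))
  intro v hv
  induction hv using Subgroup.closure_induction with
  | mem s hs =>
    obtain ⟨m, hm, rfl⟩ := hs
    rcases hc with rfl | rfl
    · have hgen : pcomm (xgen n k) (xgen n m) ∈ Subgroup.closure (Mset n k) := by
        refine Subgroup.subset_closure ⟨m, hm, 1, one_mem _, by group⟩
      have e : pcomm (xgen n m) (xgen n k) = (pcomm (xgen n k) (xgen n m))⁻¹ := by
        simp only [pcomm]; group
      rw [e]; exact inv_mem hgen
    · have hxk : (xgen n k)⁻¹ ∈ Subgroup.closure (xgen n '' {l : Fin n | l ≤ k}) :=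
        inv_mem (xk_mem_le k)
      have e : pcomm (xgen n m) (xgen n k)⁻¹
          = ((xgen n k)⁻¹)⁻¹ * pcomm (xgen n k) (xgen n m) * (xgen n k)⁻¹ := by
        simp only [pcomm]; group
      rw [e]
      exact Subgroup.subset_closure ⟨m, hm, (xgen n k)⁻¹, hxk, rfl⟩
  | one =>
    have e : pcomm (1 : freeMetabelian n) c = 1 := by simp only [pcomm]; group
    rw [e]; exact one_mem _
  | mul x y hx hy ihx ihy =>
    have e : pcomm (x * y) c = (y⁻¹ * pcomm x c * y) * pcomm y c := by
      simp only [pcomm]; group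
    rw [e]
    exact mul_mem (conjM k (hsub hy) _ ihx) ihy
  | inv x hx ihx =>
    have e : pcomm x⁻¹ c = ((x⁻¹)⁻¹ * pcomm x c * x⁻¹)⁻¹ := by
      simp only [pcomm]; group
    rw [e]
    exact inv_mem (conjM k (inv_mem (hsub hx)) _ ihx)

lemma closureM_le_NN (k : Fin n) : Subgroup.closure (Mset n k) ≤ NN n :=
  Subgroup.closure_mono (Mset_subset_Sset k)

/-- Key base lemma: conjugating a generator of S by a generator of G (or its inverse)
stays in N. -/
lemma conj_gen_S (k : Fin n) (c : freeMetabelian n)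
    (hc : c = xgen n k ∨ c = (xgen n k)⁻¹) :
    ∀ s ∈ Sset n, c⁻¹ * s * c ∈ NN n := by
  rintro s ⟨i, j, hji, w, hw, rfl⟩
  by_cases hk : k ≤ i
  · -- easy case : absorb c into w
    have hcmem : c ∈ Subgroup.closure (xgen n '' {l : Fin n | l ≤ i}) := by
      rcases hc with rfl | rfl
      · exact Subgroup.subset_closure ⟨k, hk, rfl⟩
      · exact inv_mem (Subgroup.subset_closure ⟨k, hk, rfl⟩)
    have e : c⁻¹ * (w⁻¹ * pcomm (xgen n i) (xgen n j) * w) * c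
        = (w * c)⁻¹ * pcomm (xgen n i) (xgen n j) * (w * c) := by group
    rw [e]
    exact Subgroup.subset_closure ⟨i, j, hji, w * c, mul_mem hw hcmem, rfl⟩
  · push_neg at hk  -- i < k
    set u := pcomm (xgen n i) (xgen n j) with hu
    have humem : u ∈ commutator (freeMetabelian n) := pcomm_mem_commutator _ _
    have e1 : c⁻¹ * (w⁻¹ * u * w) * c = (w * c)⁻¹ * u * (w * c) := by group
    have e2 : (c * w)⁻¹ * u * (c * w) = (w⁻¹ * u * w) * (w⁻¹ * pcomm u c * w) := by
      simp only [pcomm]; group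
    rw [e1, conj_swap humem w c, e2]
    have hwk : w ∈ Subgroup.closure (xgen n '' {l : Fin n | l ≤ k}) := by
      refine Subgroup.closure_mono (Set.image_mono (Set.setOf_subset_setOf.mpr (fun l hl => le_trans hl (le_of_lt hk)))) hw
    have husmall : u ∈ Subgroup.closure (xgen n '' {l : Fin n | l < k}) := by
      have hi : xgen n i ∈ Subgroup.closure (xgen n '' {l : Fin n | l < k}) :=
        Subgroup.subset_closure ⟨i, hk, rfl⟩
      have hj : xgen n j ∈ Subgroup.closure (xgen n '' {l : Fin n | l < k}) :=
        Subgroup.subset_closure ⟨j, lt_trans hji hk, rfl⟩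
      rw [hu]
      exact mul_mem (mul_mem (mul_mem (inv_mem hi) (inv_mem hj)) hi) hj
    have h2 : w⁻¹ * pcomm u c * w ∈ Subgroup.closure (Mset n k) :=
      conjM k hwk _ (lemC k c hc u husmall)
    exact mul_mem (Subgroup.subset_closure ⟨i, j, hji, w, hw, rfl⟩) (closureM_le_NN k h2)

lemma NN_normal (n : ℕ) : (NN n).Normal := by
  have key : ∀ g : freeMetabelian n, ∀ x ∈ NN n, g⁻¹ * x * g ∈ NN n ∧ g * x * g⁻¹ ∈ NN n := by
    intro g
    have hg : g ∈ Subgroup.closure (Set.range (xgen n)) := by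
      rw [closure_xgen_top]; trivial
    induction hg using Subgroup.closure_induction with
    | mem s hs =>
      obtain ⟨k, rfl⟩ := hs
      intro x hx
      constructor
      · exact conj_closure (conj_gen_S k (xgen n k) (Or.inl rfl)) x hx
      · have e : xgen n k * x * (xgen n k)⁻¹ = ((xgen n k)⁻¹)⁻¹ * x * (xgen n k)⁻¹ := by group
        rw [e]
        exact conj_closure (conj_gen_S k (xgen n k)⁻¹ (Or.inr rfl)) x hx
    | one => intro x hx; constructor <;> simpa using hx
    | mul a b ha hb iha ihb =>
      intro x hx
      constructor
      · have e : (a * b)⁻¹ * x * (a * b) = b⁻¹ * (a⁻¹ * x * a) * b := by group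
        rw [e]; exact (ihb _ (iha x hx).1).1
      · have e : (a * b) * x * (a * b)⁻¹ = a * (b * x * b⁻¹) * a⁻¹ := by group
        rw [e]; exact (iha _ (ihb x hx).2).2
    | inv a ha iha =>
      intro x hx
      constructor
      · have e : (a⁻¹)⁻¹ * x * a⁻¹ = a * x * a⁻¹ := by group
        rw [e]; exact (iha x hx).2
      · have e : a⁻¹ * x * (a⁻¹)⁻¹ = a⁻¹ * x * a := by group
        rw [e]; exact (iha x hx).1
  exact ⟨fun x hx g => (key g x hx).2⟩

lemma gens_comm_mem (i j : Fin n) : ⁅xgen n i, xgen n j⁆ ∈ NN n := by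
  haveI := NN_normal n
  have main : ∀ p q : Fin n, q < p → ⁅xgen n p, xgen n q⁆ ∈ NN n := by
    intro p q hqp
    have hp : pcomm (xgen n p) (xgen n q) ∈ NN n :=
      Subgroup.subset_closure ⟨p, q, hqp, 1, one_mem _, by group⟩
    have e : ⁅xgen n p, xgen n q⁆
        = (xgen n p * xgen n q) * pcomm (xgen n p) (xgen n q) * (xgen n p * xgen n q)⁻¹ := by
      simp only [pcomm, commutatorElement_def]; group
    rw [e]
    exact (NN_normal n).conj_mem _ hp _
  rcases lt_trichotomy j i with h | h | h
  · exact main i j h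
  · subst h; simpa using one_mem (NN n)
  · have e : ⁅xgen n i, xgen n j⁆ = ⁅xgen n j, xgen n i⁆⁻¹ := by
      rw [commutatorElement_inv]
    rw [e]; exact inv_mem (main j i h)

lemma commutator_le_NN (n : ℕ) : commutator (freeMetabelian n) ≤ NN n := by
  haveI := NN_normal n
  set f := QuotientGroup.mk' (NN n)
  have habel : ∀ a b : freeMetabelian n ⧸ NN n, Commute a b := by
    have htop : Subgroup.closure (f '' Set.range (xgen n)) = ⊤ := by
      rw [← MonoidHom.map_closure, closure_xgen_top,
        Subgroup.map_top_of_surjective _ (QuotientGroup.mk'_surjective _)]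
    intro a b
    have ha : a ∈ Subgroup.closure (f '' Set.range (xgen n)) := by rw [htop]; trivial
    have hb : b ∈ Subgroup.closure (f '' Set.range (xgen n)) := by rw [htop]; trivial
    induction ha, hb using Subgroup.closure_induction₂ with
    | mem x y hx hy =>
      obtain ⟨x', ⟨i, rfl⟩, rfl⟩ := hx
      obtain ⟨y', ⟨j, rfl⟩, rfl⟩ := hy
      have : (f ⁅xgen n i, xgen n j⁆ : freeMetabelian n ⧸ NN n) = 1 := by
        rw [QuotientGroup.mk'_apply, QuotientGroup.eq_one_iff]
        exact gens_comm_mem i j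
      rw [map_commutatorElement] at this
      exact commutatorElement_eq_one_iff_commute.mp this
    | one_left x hx => exact Commute.one_left x
    | one_right x hx => exact Commute.one_right x
    | mul_left x y z hx hy hz h1 h2 => exact h1.mul_left h2
    | mul_right y z x hy hz hx h1 h2 => exact h1.mul_right h2
    | inv_left x y hx hy h => exact h.inv_left
    | inv_right x y hx hy h => exact h.inv_right
  rw [_root_.commutator_def]
  rw [Subgroup.commutator_le]
  intro g _ h _
  rw [← QuotientGroup.eq_one_iff]
  have : (f ⁅g, h⁆ : freeMetabelian n ⧸ NN n) = ⁅f g, f h⁆ := map_commutatorElement f g h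
  rw [QuotientGroup.mk'_apply] at this
  rw [this]
  exact commutatorElement_eq_one_iff_commute.mpr (habel (f g) (f h))

lemma NN_le_commutator (n : ℕ) : NN n ≤ commutator (freeMetabelian n) := by
  rw [NN, Subgroup.closure_le]
  rintro a ⟨i, j, hji, w, hw, rfl⟩
  have hp : pcomm (xgen n i) (xgen n j) ∈ commutator (freeMetabelian n) :=
    pcomm_mem_commutator _ _
  have := (inferInstance : (commutator (freeMetabelian n)).Normal).conj_mem _ hp w⁻¹
  simpa using this

end Stmt12Aux

theorem stmt12 (n : ℕ) :
    commutator (freeMetabelian n) =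
      Subgroup.closure {a : freeMetabelian n |
        ∃ i j : Fin n, j < i ∧
          ∃ w ∈ Subgroup.closure (xgen n '' {k : Fin n | k ≤ i}),
            a = w⁻¹ * pcomm (xgen n i) (xgen n j) * w} := by
  exact le_antisymm (Stmt12Aux.commutator_le_NN n) (Stmt12Aux.NN_le_commutator n)
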